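/- With the maps of the context, let p ∈ ℝ be arbitrary and suppose λ ∈ ℂ satisfies √2·|λ| = (2n+1)π for some nonnegative integer n. Then the finitely supported vectors φ_{b−} := (e^{−ip}(e₁ − e₄) − e^{ip}(e₂ − e₅))·δ₀ and φ_{b+} := (e^{−ip}(e₁ − e₄) + e^{ip}(e₂ − e₅))·δ₀ satisfy A_p φ_{b−} = φ_{b−} and A_p φ_{b+} = −φ_{b+}; i.e. at the critical coupling strengths √2|λ| ∈ (2ℤ+1)π the interacting two-particle evolution has two perfectly localized bound states with eigenvalues +1 and −1, for every value of the total momentum. -/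

import Mathlib

set_option maxHeartbeats 1000000


noncomputable section
open Matrix
open scoped Classical

/-- The 6×6 block-diagonal matrix `M = diag(O′, O′)`, where `O′` is the 3×3 matrix with rows
`(0, 0, −conj λ)`, `(0, 0, −conj λ)`, `(−λ, −λ, 0)`. -/
def Mblk (l : ℂ) : Matrix (Fin 6) (Fin 6) ℂ :=
  !![0, 0, -(starRingEnd ℂ) l, 0, 0, 0;
     0, 0, -(starRingEnd ℂ) l, 0, 0, 0;
     -l, -l, 0, 0, 0, 0;
     0, 0, 0, 0, 0, -(starRingEnd ℂ) l;
     0, 0, 0, 0, 0, -(starRingEnd ℂ) l;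
     0, 0, 0, -l, -l, 0]

/-- The one-step interaction unitary `E = exp(−i·M)`. -/
def Emat (l : ℂ) : Matrix (Fin 6) (Fin 6) ℂ := NormedSpace.exp ((-Complex.I) • Mblk l)

/-- The swap `S`: `(S x)(y) = (x(−y)₄, x(−y)₅, x(−y)₆, x(−y)₁, x(−y)₂, x(−y)₃)`. -/
def Sop (x : ℤ → Fin 6 → ℂ) : ℤ → Fin 6 → ℂ := fun y i => x (-y) (![3, 4, 5, 0, 1, 2] i)

/-- The antisymmetrizer `P₋ = (1/2)(id − S)`. -/
def Pneg (x : ℤ → Fin 6 → ℂ) : ℤ → Fin 6 → ℂ := fun y i => (1 / 2) * (x y i - Sop x y i)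

/-- The free evolution `D_p` at total momentum `p`:
`(D_p x)(y) = (e^{2ip} x(y)₁, e^{−2ip} x(y)₂, x(y+2)₃, e^{2ip} x(y)₄, e^{−2ip} x(y)₅, x(y−2)₆)`. -/
def Dop (p : ℝ) (x : ℤ → Fin 6 → ℂ) : ℤ → Fin 6 → ℂ := fun y =>
  ![Complex.exp (2 * p * Complex.I) * x y 0,
    Complex.exp (-(2 * p) * Complex.I) * x y 1,
    x (y + 2) 2,
    Complex.exp (2 * p * Complex.I) * x y 3,
    Complex.exp (-(2 * p) * Complex.I) * x y 4,
    x (y - 2) 5]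

/-- The interaction `J`: `(J x)(0) = E · x(0)` and `(J x)(y) = x(y)` for `y ≠ 0`. -/
def Jop (l : ℂ) (x : ℤ → Fin 6 → ℂ) : ℤ → Fin 6 → ℂ := fun y =>
  if y = 0 then (Emat l).mulVec (x 0) else x y

/-- The one-step two-particle evolution `A_p = P₋ ∘ J ∘ D_p ∘ P₋`. -/
def Aop (l : ℂ) (p : ℝ) : (ℤ → Fin 6 → ℂ) → (ℤ → Fin 6 → ℂ) :=
  Pneg ∘ Jop l ∘ Dop p ∘ Pneg

/-! ### Auxiliary lemmas -/

@[simp] lemma vec6_0 {α : Type*} (a b c d e f : α) : ![a,b,c,d,e,f] 0 = a := rfl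
@[simp] lemma vec6_1 {α : Type*} (a b c d e f : α) : ![a,b,c,d,e,f] 1 = b := rfl
@[simp] lemma vec6_2 {α : Type*} (a b c d e f : α) : ![a,b,c,d,e,f] 2 = c := rfl
@[simp] lemma vec6_3 {α : Type*} (a b c d e f : α) : ![a,b,c,d,e,f] 3 = d := rfl
@[simp] lemma vec6_4 {α : Type*} (a b c d e f : α) : ![a,b,c,d,e,f] 4 = e := rfl
@[simp] lemma vec6_5 {α : Type*} (a b c d e f : α) : ![a,b,c,d,e,f] 5 = f := rfl

@[simp] lemma vec6_mk0 {α : Type*} (a b c d e f : α) (h : 0 < 6) : ![a,b,c,d,e,f] ⟨0,h⟩ = a := rfl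
@[simp] lemma vec6_mk1 {α : Type*} (a b c d e f : α) (h : 1 < 6) : ![a,b,c,d,e,f] ⟨1,h⟩ = b := rfl
@[simp] lemma vec6_mk2 {α : Type*} (a b c d e f : α) (h : 2 < 6) : ![a,b,c,d,e,f] ⟨2,h⟩ = c := rfl
@[simp] lemma vec6_mk3 {α : Type*} (a b c d e f : α) (h : 3 < 6) : ![a,b,c,d,e,f] ⟨3,h⟩ = d := rfl
@[simp] lemma vec6_mk4 {α : Type*} (a b c d e f : α) (h : 4 < 6) : ![a,b,c,d,e,f] ⟨4,h⟩ = e := rfl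
@[simp] lemma vec6_mk5 {α : Type*} (a b c d e f : α) (h : 5 < 6) : ![a,b,c,d,e,f] ⟨5,h⟩ = f := rfl

/-- If `v` is an eigenvector of `A` with eigenvalue `μ`, then it is an eigenvector of
`exp A` with eigenvalue `exp μ`. -/
lemma exp_mulVec_eigen (A : Matrix (Fin 6) (Fin 6) ℂ) (v : Fin 6 → ℂ) (μ : ℂ)
    (h : A.mulVec v = μ • v) :
    (NormedSpace.exp A).mulVec v = Complex.exp μ • v := by
  letI : SeminormedRing (Matrix (Fin 6) (Fin 6) ℂ) := Matrix.linftyOpSemiNormedRing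
  letI : NormedRing (Matrix (Fin 6) (Fin 6) ℂ) := Matrix.linftyOpNormedRing
  letI : NormedAlgebra ℂ (Matrix (Fin 6) (Fin 6) ℂ) := Matrix.linftyOpNormedAlgebra
  have hpow : ∀ k : ℕ, (A ^ k).mulVec v = μ ^ k • v := by
    intro k
    induction k with
    | zero => simp
    | succ k ih =>
      rw [pow_succ', ← Matrix.mulVec_mulVec, ih, Matrix.mulVec_smul, h, smul_smul,
        ← pow_succ]
  let L : Matrix (Fin 6) (Fin 6) ℂ →ₗ[ℂ] (Fin 6 → ℂ) :=
    { toFun := fun B => B.mulVec v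
      map_add' := fun B C => Matrix.add_mulVec B C v
      map_smul' := fun c B => Matrix.smul_mulVec c B v }
  let Lc : Matrix (Fin 6) (Fin 6) ℂ →L[ℂ] (Fin 6 → ℂ) := LinearMap.toContinuousLinearMap L
  have hsum : Summable (fun k : ℕ => ((Nat.factorial k : ℂ))⁻¹ • A ^ k) :=
    NormedSpace.expSeries_summable' A
  have h1 : (NormedSpace.exp A).mulVec v = Lc (NormedSpace.exp A) := rfl
  rw [h1, NormedSpace.exp_eq_tsum ℂ, Lc.map_tsum hsum]
  have h2 : ∀ k : ℕ, Lc (((Nat.factorial k : ℂ))⁻¹ • A ^ k)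
      = (((Nat.factorial k : ℂ))⁻¹ * μ ^ k) • v := by
    intro k
    show (((Nat.factorial k : ℂ))⁻¹ • A ^ k).mulVec v = _
    rw [Matrix.smul_mulVec, hpow, smul_smul]
  simp_rw [h2]
  rw [Summable.tsum_smul_const]
  · congr 1
    rw [Complex.exp_eq_exp_ℂ, NormedSpace.exp_eq_tsum ℂ]
    simp [smul_eq_mul]
  · simpa [smul_eq_mul] using NormedSpace.expSeries_summable' (𝕂 := ℂ) μ

/-- The action of the interaction unitary at critical coupling on vectors with vanishing
third and sixth components. -/
lemma Emat_mulVec_critical (l : ℂ) (s : ℝ) (hs : (s : ℂ) ≠ 0)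
    (hlc : 2 * (l * (starRingEnd ℂ) l) = (s : ℂ) ^ 2)
    (hexp : Complex.exp ((s : ℂ) * Complex.I) = -1) (x₁ x₂ x₄ x₅ : ℂ) :
    (Emat l).mulVec ![x₁, x₂, 0, x₄, x₅, 0] = ![-x₂, -x₁, 0, -x₅, -x₄, 0] := by
  set t : ℂ := 2 * l / (s : ℂ) with ht
  have hexp' : Complex.exp (-((s : ℂ) * Complex.I)) = -1 := by
    rw [Complex.exp_neg, hexp]
    norm_num
  have key : ∀ (w : Fin 6 → ℂ) (μ : ℂ),
      ((-Complex.I) • Mblk l).mulVec w = μ • w →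
      (Emat l).mulVec w = Complex.exp μ • w := fun w μ h =>
    exp_mulVec_eigen _ w μ h
  have hw1p : (Emat l).mulVec ![1, 1, -t, 0, 0, 0] = (-1 : ℂ) • ![1, 1, -t, 0, 0, 0] := by
    rw [key ![1, 1, -t, 0, 0, 0] (-((s:ℂ) * Complex.I)) ?_, hexp']
    funext i
    fin_cases i <;>
      simp only [Mblk, ht, Matrix.mulVec, dotProduct, Fin.sum_univ_six, Pi.smul_apply,
        Matrix.smul_apply, Matrix.cons_val', Matrix.cons_val_zero, Matrix.cons_val_one,
        Matrix.head_cons, Matrix.empty_val', Matrix.cons_val_fin_one, Matrix.head_fin_const,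
        vec6_0, vec6_1, vec6_2, vec6_3, vec6_4, vec6_5, Matrix.of_apply, smul_eq_mul, Fin.reduceFinMk, Fin.isValue, Matrix.cons_val] <;>
      field_simp <;>
      (first | linear_combination hlc | linear_combination (-1 : ℂ) * hlc | linear_combination (Complex.I * hlc) | linear_combination (-Complex.I * hlc) |
        linear_combination ((s:ℂ) * Complex.I * hlc) |
        linear_combination (-(s:ℂ) * Complex.I * hlc) | ring)
  have hw1m : (Emat l).mulVec ![1, 1, t, 0, 0, 0] = (-1 : ℂ) • ![1, 1, t, 0, 0, 0] := by
    rw [key ![1, 1, t, 0, 0, 0] ((s:ℂ) * Complex.I) ?_, hexp]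
    funext i
    fin_cases i <;>
      simp only [Mblk, ht, Matrix.mulVec, dotProduct, Fin.sum_univ_six, Pi.smul_apply,
        Matrix.smul_apply, Matrix.cons_val', Matrix.cons_val_zero, Matrix.cons_val_one,
        Matrix.head_cons, Matrix.empty_val', Matrix.cons_val_fin_one, Matrix.head_fin_const,
        vec6_0, vec6_1, vec6_2, vec6_3, vec6_4, vec6_5, Matrix.of_apply, smul_eq_mul, Fin.reduceFinMk, Fin.isValue, Matrix.cons_val] <;>
      field_simp <;>
      (first | linear_combination hlc | linear_combination (-1 : ℂ) * hlc | linear_combination (Complex.I * hlc) | linear_combination (-Complex.I * hlc) |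
        linear_combination ((s:ℂ) * Complex.I * hlc) |
        linear_combination (-(s:ℂ) * Complex.I * hlc) | ring)
  have hw2p : (Emat l).mulVec ![0, 0, 0, 1, 1, -t] = (-1 : ℂ) • ![0, 0, 0, 1, 1, -t] := by
    rw [key ![0, 0, 0, 1, 1, -t] (-((s:ℂ) * Complex.I)) ?_, hexp']
    funext i
    fin_cases i <;>
      simp only [Mblk, ht, Matrix.mulVec, dotProduct, Fin.sum_univ_six, Pi.smul_apply,
        Matrix.smul_apply, Matrix.cons_val', Matrix.cons_val_zero, Matrix.cons_val_one,
        Matrix.head_cons, Matrix.empty_val', Matrix.cons_val_fin_one, Matrix.head_fin_const,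
        vec6_0, vec6_1, vec6_2, vec6_3, vec6_4, vec6_5, Matrix.of_apply, smul_eq_mul, Fin.reduceFinMk, Fin.isValue, Matrix.cons_val] <;>
      field_simp <;>
      (first | linear_combination hlc | linear_combination (-1 : ℂ) * hlc | linear_combination (Complex.I * hlc) | linear_combination (-Complex.I * hlc) |
        linear_combination ((s:ℂ) * Complex.I * hlc) |
        linear_combination (-(s:ℂ) * Complex.I * hlc) | ring)
  have hw2m : (Emat l).mulVec ![0, 0, 0, 1, 1, t] = (-1 : ℂ) • ![0, 0, 0, 1, 1, t] := by
    rw [key ![0, 0, 0, 1, 1, t] ((s:ℂ) * Complex.I) ?_, hexp]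
    funext i
    fin_cases i <;>
      simp only [Mblk, ht, Matrix.mulVec, dotProduct, Fin.sum_univ_six, Pi.smul_apply,
        Matrix.smul_apply, Matrix.cons_val', Matrix.cons_val_zero, Matrix.cons_val_one,
        Matrix.head_cons, Matrix.empty_val', Matrix.cons_val_fin_one, Matrix.head_fin_const,
        vec6_0, vec6_1, vec6_2, vec6_3, vec6_4, vec6_5, Matrix.of_apply, smul_eq_mul, Fin.reduceFinMk, Fin.isValue, Matrix.cons_val] <;>
      field_simp <;>
      (first | linear_combination hlc | linear_combination (-1 : ℂ) * hlc | linear_combination (Complex.I * hlc) | linear_combination (-Complex.I * hlc) |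
        linear_combination ((s:ℂ) * Complex.I * hlc) |
        linear_combination (-(s:ℂ) * Complex.I * hlc) | ring)
  have hk1 : (Emat l).mulVec ![1, -1, 0, 0, 0, 0] = (1 : ℂ) • ![1, -1, 0, 0, 0, 0] := by
    have := key ![1, -1, 0, 0, 0, 0] 0 ?_
    · rwa [Complex.exp_zero] at this
    funext i
    fin_cases i <;>
      simp only [Mblk, Matrix.mulVec, dotProduct, Fin.sum_univ_six, Pi.smul_apply,
        Matrix.smul_apply, Matrix.cons_val', Matrix.cons_val_zero, Matrix.cons_val_one,
        Matrix.head_cons, Matrix.empty_val', Matrix.cons_val_fin_one, Matrix.head_fin_const,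
        vec6_0, vec6_1, vec6_2, vec6_3, vec6_4, vec6_5, Matrix.of_apply, smul_eq_mul, Fin.reduceFinMk, Fin.isValue, Matrix.cons_val] <;>
      ring
  have hk2 : (Emat l).mulVec ![0, 0, 0, 1, -1, 0] = (1 : ℂ) • ![0, 0, 0, 1, -1, 0] := by
    have := key ![0, 0, 0, 1, -1, 0] 0 ?_
    · rwa [Complex.exp_zero] at this
    funext i
    fin_cases i <;>
      simp only [Mblk, Matrix.mulVec, dotProduct, Fin.sum_univ_six, Pi.smul_apply,
        Matrix.smul_apply, Matrix.cons_val', Matrix.cons_val_zero, Matrix.cons_val_one,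
        Matrix.head_cons, Matrix.empty_val', Matrix.cons_val_fin_one, Matrix.head_fin_const,
        vec6_0, vec6_1, vec6_2, vec6_3, vec6_4, vec6_5, Matrix.of_apply, smul_eq_mul, Fin.reduceFinMk, Fin.isValue, Matrix.cons_val] <;>
      ring
  have hdec : ![x₁, x₂, 0, x₄, x₅, 0]
      = ((x₁ + x₂)/4) • ![1, 1, -t, 0, 0, 0] + ((x₁ + x₂)/4) • ![1, 1, t, 0, 0, 0]
        + ((x₁ - x₂)/2) • ![1, -1, 0, 0, 0, 0]
        + ((x₄ + x₅)/4) • ![0, 0, 0, 1, 1, -t] + ((x₄ + x₅)/4) • ![0, 0, 0, 1, 1, t]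
        + ((x₄ - x₅)/2) • ![0, 0, 0, 1, -1, 0] := by
    funext i
    fin_cases i <;> simp <;> ring
  rw [hdec, Matrix.mulVec_add, Matrix.mulVec_add, Matrix.mulVec_add, Matrix.mulVec_add,
    Matrix.mulVec_add, Matrix.mulVec_smul, Matrix.mulVec_smul, Matrix.mulVec_smul,
    Matrix.mulVec_smul, Matrix.mulVec_smul, Matrix.mulVec_smul,
    hw1p, hw1m, hw2p, hw2m, hk1, hk2]
  funext i
  fin_cases i <;> simp <;> ring

/-- `P₋` fixes antisymmetric localized vectors of the form `(a, b, 0, −a, −b, 0)·δ₀`. -/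
lemma Pneg_localized (a b : ℂ) :
    Pneg (fun y => if y = 0 then ![a, b, 0, -a, -b, 0] else 0)
      = fun y => if y = 0 then ![a, b, 0, -a, -b, 0] else 0 := by
  funext y i
  by_cases hy : y = 0
  · subst hy
    fin_cases i <;> simp [Pneg, Sop] <;> ring
  · simp only [Pneg, Sop, if_neg hy, if_neg (fun h => hy (neg_eq_zero.mp h)), Pi.zero_apply]
    ring

/-- The key computation: the action of `A_p` on antisymmetric localized vectors at
critical coupling. -/
lemma Aop_localized (l : ℂ) (p : ℝ) (s : ℝ) (hs : (s : ℂ) ≠ 0)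
    (hlc : 2 * (l * (starRingEnd ℂ) l) = (s : ℂ) ^ 2)
    (hexp : Complex.exp ((s : ℂ) * Complex.I) = -1) (a b : ℂ) :
    Aop l p (fun y => if y = 0 then ![a, b, 0, -a, -b, 0] else 0)
      = fun y => if y = 0 then
          ![-(Complex.exp (-(2 * p) * Complex.I) * b), -(Complex.exp (2 * p * Complex.I) * a), 0,
            Complex.exp (-(2 * p) * Complex.I) * b, Complex.exp (2 * p * Complex.I) * a, 0]
        else 0 := by
  set ep : ℂ := Complex.exp (2 * p * Complex.I) with hep
  set em : ℂ := Complex.exp (-(2 * p) * Complex.I) with hem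
  have hD : Dop p (fun y => if y = 0 then ![a, b, 0, -a, -b, 0] else 0)
      = fun y => if y = 0 then ![ep * a, em * b, 0, -(ep * a), -(em * b), 0] else 0 := by
    funext y i
    by_cases hy : y = 0
    · subst hy
      fin_cases i <;>
        simp [Dop, hep, hem] <;> ring
    · fin_cases i <;>
        · simp [Dop, hy, hep, hem]
          try (split <;> simp)
  have hJ : Jop l (fun y => if y = 0 then ![ep * a, em * b, 0, -(ep * a), -(em * b), 0] else 0)
      = fun y => if y = 0 then ![-(em * b), -(ep * a), 0, -(-(em * b)), -(-(ep * a)), 0] else 0 := by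
    funext y
    by_cases hy : y = 0
    · subst hy
      have h := Emat_mulVec_critical l s hs hlc hexp (ep * a) (em * b) (-(ep * a)) (-(em * b))
      show (Emat l).mulVec ![ep * a, em * b, 0, -(ep * a), -(em * b), 0]
        = ![-(em * b), -(ep * a), 0, -(-(em * b)), -(-(ep * a)), 0]
      exact h
    · simp [Jop, hy]
  have hfix := Pneg_localized a b
  have hfix2 := Pneg_localized (-(em * b)) (-(ep * a))
  show Pneg (Jop l (Dop p (Pneg _))) = _
  rw [hfix, hD, hJ, hfix2]
  funext y i
  by_cases hy : y = 0
  · subst hy; fin_cases i <;> simp [hep, hem]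
  · simp [hy]

/-- At the critical coupling strengths `√2|λ| = (2n+1)π`, for every total momentum `p`, the
perfectly localized vectors `φ_{b−} = (e^{−ip}(e₁−e₄) − e^{ip}(e₂−e₅))·δ₀` and
`φ_{b+} = (e^{−ip}(e₁−e₄) + e^{ip}(e₂−e₅))·δ₀` are bound states of the interacting
two-particle evolution with eigenvalues `+1` and `−1`. -/
theorem Aop_bound_states_critical_coupling (l : ℂ) (p : ℝ) (n : ℕ)
    (hl : Real.sqrt 2 * ‖l‖ = (2 * n + 1) * Real.pi) :
    let φbm : ℤ → Fin 6 → ℂ := fun y =>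
      if y = 0 then
        ![Complex.exp (-p * Complex.I), -Complex.exp (p * Complex.I), 0,
          -Complex.exp (-p * Complex.I), Complex.exp (p * Complex.I), 0]
      else 0
    let φbp : ℤ → Fin 6 → ℂ := fun y =>
      if y = 0 then
        ![Complex.exp (-p * Complex.I), Complex.exp (p * Complex.I), 0,
          -Complex.exp (-p * Complex.I), -Complex.exp (p * Complex.I), 0]
      else 0
    Aop l p φbm = φbm ∧ Aop l p φbp = -φbp := by
  intro φbm φbp
  set s : ℝ := (2 * n + 1) * Real.pi with hsdef
  have hspos : 0 < s := by
    apply mul_pos _ Real.pi_pos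
    positivity
  have hs : (s : ℂ) ≠ 0 := by
    exact_mod_cast Complex.ofReal_ne_zero.mpr hspos.ne'
  have habs : Real.sqrt 2 * ‖l‖ = s := hl
  have habs2 : 2 * ‖l‖ ^ 2 = s ^ 2 := by
    have h2 : (Real.sqrt 2) ^ 2 = 2 := Real.sq_sqrt (by norm_num)
    nlinarith [habs, h2]
  have hlc : 2 * (l * (starRingEnd ℂ) l) = (s : ℂ) ^ 2 := by
    rw [Complex.mul_conj]
    rw [Complex.normSq_eq_norm_sq]
    exact_mod_cast congrArg (Complex.ofReal) habs2
  have hexp : Complex.exp ((s : ℂ) * Complex.I) = -1 := by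
    have : ((s : ℂ)) * Complex.I = ((2 * n + 1 : ℕ) : ℂ) * (Real.pi * Complex.I) := by
      rw [hsdef]
      push_cast
      ring
    rw [this, Complex.exp_nat_mul, Complex.exp_pi_mul_I]
    exact Odd.neg_one_pow ⟨n, by ring⟩
  set ea : ℂ := Complex.exp (-p * Complex.I) with hea
  set eb : ℂ := Complex.exp (p * Complex.I) with heb
  have hea2 : Complex.exp (-(2 * p) * Complex.I) * eb = ea := by
    rw [heb, ← Complex.exp_add]
    congr 1
    push_cast
    ring
  have heb2 : Complex.exp (2 * p * Complex.I) * ea = eb := by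
    rw [hea, ← Complex.exp_add]
    congr 1
    push_cast
    ring
  have hea' : Complex.exp (-((p : ℂ) * Complex.I)) = ea := by
    rw [hea]; congr 1; ring
  have hea2' : Complex.exp (-(2 * (p : ℂ) * Complex.I)) * eb = ea := by
    rw [show Complex.exp (-(2 * (p : ℂ) * Complex.I))
      = Complex.exp (-(2 * (p : ℝ)) * Complex.I) from by congr 1; push_cast; ring]
    exact hea2
  constructor
  · have h1 : φbm = fun y => if y = 0 then ![ea, -eb, 0, -ea, -(-eb), 0] else 0 := by
      funext y i
      by_cases hy : y = 0
      · subst hy; fin_cases i <;> simp [φbm, hea', heb]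
      · simp [φbm, hy]
    rw [h1, Aop_localized l p s hs hlc hexp ea (-eb)]
    funext y i
    by_cases hy : y = 0
    · subst hy
      fin_cases i <;>
        simp [φbm, hea', hea2, hea2', heb2] <;>
        first
          | (rw [show -(Complex.exp (-(2 * ↑p) * Complex.I) * -eb) = Complex.exp (-(2 * ↑p) * Complex.I) * eb by ring, hea2])
          | (rw [show -(Complex.exp (2 * ↑p * Complex.I) * ea) = -(eb) from by rw [heb2]])
          | skip
    · simp [φbm, hy]
  · have h1 : φbp = fun y => if y = 0 then ![ea, eb, 0, -ea, -eb, 0] else 0 := by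
      funext y i
      by_cases hy : y = 0
      · subst hy; fin_cases i <;> simp [φbp, hea', heb]
      · simp [φbp, hy]
    rw [h1, Aop_localized l p s hs hlc hexp ea eb]
    funext y i
    by_cases hy : y = 0
    · subst hy
      fin_cases i <;>
        simp [φbp, hea', hea2, hea2', heb2]
    · simp [φbp, hy]
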